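/- Let B be an integral domain and A an inert subring of B (i.e., whenever a, b ∈ B \ {0} satisfy ab ∈ A, then a ∈ A and b ∈ A). If B is a unique factorization domain, then A is a unique factorization domain. -/

import Mathlib

/-- If `A` is an inert subring of an integral domain `B` (nonzero `a, b` with `ab ∈ A`
satisfy `a, b ∈ A`) and `B` is a UFD, then `A` is a UFD. -/
theorem inert_subring_of_UFD_is_UFD {B : Type*} [CommRing B] [IsDomain B]
    [UniqueFactorizationMonoid B] (A : Subring B)
    (hA : ∀ a b : B, a ≠ 0 → b ≠ 0 → a * b ∈ A → a ∈ A ∧ b ∈ A) :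
    UniqueFactorizationMonoid A := by
  -- units of A are exactly elements of A that are units in B
  have hunit : ∀ x : A, IsUnit (x : B) → IsUnit x := by
    rintro ⟨x, hx⟩ ⟨u, hu⟩
    simp only at hu
    have hxne : x ≠ 0 := by rintro rfl; exact u.ne_zero hu
    have hmul : x * ↑u⁻¹ = 1 := by rw [← hu]; exact u.mul_inv
    have hinv : (↑u⁻¹ : B) ∈ A := (hA x ↑u⁻¹ hxne u⁻¹.ne_zero (hmul ▸ A.one_mem)).2
    exact IsUnit.of_mul_eq_one (a := (⟨x, hx⟩ : A)) (⟨↑u⁻¹, hinv⟩ : A)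
      (by ext; exact hmul)
  have hwf : WellFounded (DvdNotUnit (α := A)) := by
    have := (UniqueFactorizationMonoid.toIsWellFounded (α := B)).wf
    refine Subrelation.wf (r := InvImage (DvdNotUnit (α := B)) (fun x : A => (x : B)))
      ?_ (InvImage.wf _ this)
    rintro a b ⟨ha, x, hx, rfl⟩
    exact ⟨fun h => ha (by exact_mod_cast (show (↑a : B) = 0 from h)), x, fun h => hx (hunit x h), rfl⟩
  have hiwf : IsWellFounded A DvdNotUnit := ⟨hwf⟩
  refine @UniqueFactorizationMonoid.mk A _ inferInstance hiwf (@fun p => ⟨fun hp => ?_, Prime.irreducible⟩)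
  have hp0 : p ≠ 0 := hp.ne_zero
  have hpB0 : (p : B) ≠ 0 := by exact_mod_cast hp0
  -- p is irreducible in B
  have hirr : Irreducible (p : B) := by
    constructor
    · exact fun h => hp.not_isUnit (hunit p h)
    · intro a b hab
      rcases eq_or_ne a 0 with rfl | ha0
      · exact absurd (by simpa using hab) hpB0
      rcases eq_or_ne b 0 with rfl | hb0
      · exact absurd (by simpa using hab) hpB0
      obtain ⟨haA, hbA⟩ := hA a b ha0 hb0 (hab ▸ p.2)
      rcases hp.isUnit_or_isUnit (a := ⟨a, haA⟩) (b := ⟨b, hbA⟩)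
        (by ext; exact hab) with h | h
      · exact Or.inl (h.map A.subtype)
      · exact Or.inr (h.map A.subtype)
  have hprime : Prime (p : B) := hirr.prime
  refine ⟨hp0, hp.not_isUnit, fun a b hab => ?_⟩
  have : (p : B) ∣ (a : B) * (b : B) := by
    obtain ⟨c, hc⟩ := hab
    exact ⟨c, by exact_mod_cast congrArg (Subtype.val) hc⟩
  have key : ∀ x : A, (p : B) ∣ (x : B) → p ∣ x := by
    rintro ⟨x, hx⟩ ⟨c, hc⟩
    rcases eq_or_ne x 0 with rfl | hx0
    · exact ⟨0, by ext; simp⟩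
    have hc0 : c ≠ 0 := by rintro rfl; exact hx0 (by simpa using hc)
    have hcA : c ∈ A := (hA _ c hpB0 hc0 (hc ▸ hx)).2
    exact ⟨⟨c, hcA⟩, by ext; exact hc⟩
  rcases hprime.2.2 _ _ this with h | h
  · exact Or.inl (key a h)
  · exact Or.inr (key b h)
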